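/- Fix real numbers λ > 0 and 0 < β < 1. For every real s > 0, the series of expectations ∑_{m=1}^∞ E[(s − T_m)₊^{−β}] converges and equals λ s^{1−β}/(1−β). -/

import Mathlib

open MeasureTheory ProbabilityTheory Real Set
open scoped ENNReal


lemma conv_withDensity (f g : ℝ → ℝ≥0∞) (hf : Measurable f) (hg : Measurable g) :
    MeasureTheory.Measure.conv (volume.withDensity f) (volume.withDensity g)
      = volume.withDensity (fun z => ∫⁻ y, f (z - y) * g y) := by
  have hadd : Measurable fun p : ℝ × ℝ => p.1 + p.2 := measurable_add
  ext t ht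
  have hGmeas : Measurable fun z => ∫⁻ y, f (z - y) * g y := by
    apply Measurable.lintegral_prod_right (f := fun z y => f (z - y) * g y)
    exact ((hf.comp (measurable_fst.sub measurable_snd)).mul (hg.comp measurable_snd))
  rw [Measure.conv, Measure.map_apply hadd ht, Measure.prod_apply (hadd ht),
    withDensity_apply _ ht]
  -- rewrite inner measure
  have h1 : ∀ x : ℝ, (volume.withDensity g) (Prod.mk x ⁻¹' ((fun p : ℝ × ℝ => p.1 + p.2) ⁻¹' t))
      = ∫⁻ y, t.indicator (fun _ => (1 : ℝ≥0∞)) (x + y) * g y := by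
    intro x
    have hA : MeasurableSet ((fun y : ℝ => x + y) ⁻¹' t) := ht.preimage (measurable_const_add x)
    have : Prod.mk x ⁻¹' ((fun p : ℝ × ℝ => p.1 + p.2) ⁻¹' t) = (fun y : ℝ => x + y) ⁻¹' t := rfl
    rw [this, withDensity_apply _ hA, ← lintegral_indicator hA]
    refine lintegral_congr fun y => ?_
    by_cases h : x + y ∈ t <;> simp [Set.indicator, h]
  simp only [h1]
  have hImeas : Measurable fun p : ℝ × ℝ => t.indicator (fun _ => (1 : ℝ≥0∞)) (p.1 + p.2) * g p.2 :=
    ((measurable_one.indicator ht).comp hadd).mul (hg.comp measurable_snd)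
  rw [lintegral_withDensity_eq_lintegral_mul _ hf
    (Measurable.lintegral_prod_right (f := fun x y => t.indicator (fun _ => (1:ℝ≥0∞)) (x+y) * g y) hImeas)]
  -- LHS now: ∫⁻ x, f x * ∫⁻ y, ind (x+y) * g y
  have hL : ∫⁻ x, (f * fun x => ∫⁻ y, t.indicator (fun _ => (1:ℝ≥0∞)) (x + y) * g y) x
      = ∫⁻ y, ∫⁻ x, f x * (t.indicator (fun _ => (1:ℝ≥0∞)) (x + y) * g y) := by
    have : ∀ x, (f * fun x => ∫⁻ y, t.indicator (fun _ => (1:ℝ≥0∞)) (x + y) * g y) x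
        = ∫⁻ y, f x * (t.indicator (fun _ => (1:ℝ≥0∞)) (x + y) * g y) := by
      intro x
      simp only [Pi.mul_apply]
      have hm : Measurable fun y : ℝ => t.indicator (fun _ => (1:ℝ≥0∞)) (x + y) * g y :=
        ((measurable_one.indicator ht).comp (measurable_const_add x)).mul hg
      rw [← lintegral_const_mul _ hm]
    simp only [this]
    exact lintegral_lintegral_swap (((hf.comp measurable_fst).mul hImeas).aemeasurable)
  rw [hL]
  -- RHS
  have hR : ∫⁻ z in t, ∫⁻ y, f (z - y) * g y
      = ∫⁻ y, ∫⁻ z, t.indicator (fun _ => (1:ℝ≥0∞)) z * (f (z - y) * g y) := by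
    rw [← lintegral_indicator ht]
    have : ∀ z, t.indicator (fun z => ∫⁻ y, f (z - y) * g y) z
        = ∫⁻ y, t.indicator (fun _ => (1:ℝ≥0∞)) z * (f (z - y) * g y) := by
      intro z
      by_cases h : z ∈ t <;> simp [Set.indicator, h]
    simp only [this]
    refine lintegral_lintegral_swap ?_
    exact (((measurable_one.indicator ht).comp measurable_fst).mul
      ((hf.comp (measurable_fst.sub measurable_snd)).mul (hg.comp measurable_snd))).aemeasurable
  rw [hR]
  refine lintegral_congr fun y => ?_
  calc ∫⁻ x, f x * (t.indicator (fun _ => (1:ℝ≥0∞)) (x + y) * g y)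
      = ∫⁻ x, (fun z => t.indicator (fun _ => (1:ℝ≥0∞)) z * (f (z - y) * g y)) (x + y) := by
        refine lintegral_congr fun x => ?_
        simp only [add_sub_cancel_right]
        ring
    _ = ∫⁻ z, t.indicator (fun _ => (1:ℝ≥0∞)) z * (f (z - y) * g y) := by
        exact lintegral_add_right_eq_self
          (fun z => t.indicator (fun _ => (1:ℝ≥0∞)) z * (f (z - y) * g y)) y


lemma gammaPDF_succ_conv (n : ℕ) {l : ℝ} (hl : 0 < l) (z : ℝ) :
    ∫⁻ y, gammaPDF ((n : ℝ) + 1) l (z - y) * gammaPDF 1 l y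
      = gammaPDF ((n : ℝ) + 2) l z := by
  rcases lt_or_ge z 0 with hz | hz
  · rw [gammaPDF_of_neg hz]
    have : ∀ y : ℝ, gammaPDF ((n : ℝ) + 1) l (z - y) * gammaPDF 1 l y = 0 := by
      intro y
      rcases lt_or_ge y 0 with hy | hy
      · rw [gammaPDF_of_neg hy, mul_zero]
      · rw [gammaPDF_of_neg (by linarith : z - y < 0), zero_mul]
    simp only [this, lintegral_zero]
  · -- z ≥ 0
    set C : ℝ := l ^ (n + 2) / n.factorial * exp (-(l * z)) with hC
    have hC0 : 0 ≤ C := by positivity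
    have hG1 : Real.Gamma ((n : ℝ) + 1) = n.factorial := Real.Gamma_nat_eq_factorial n
    have hG2 : Real.Gamma ((n : ℝ) + 2) = (n + 1).factorial := by
      rw [show ((n : ℝ) + 2) = ((n + 1 : ℕ) : ℝ) + 1 by push_cast; ring]
      exact Real.Gamma_nat_eq_factorial (n + 1)
    have hpow1 : ∀ x : ℝ, x ^ ((n : ℝ) + 1) = x ^ (n + 1) := fun x => by
      rw [show ((n : ℝ) + 1) = ((n + 1 : ℕ) : ℝ) by push_cast; ring, Real.rpow_natCast]
    have hpow2 : ∀ x : ℝ, x ^ ((n : ℝ) + 2) = x ^ (n + 2) := fun x => by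
      rw [show ((n : ℝ) + 2) = ((n + 2 : ℕ) : ℝ) by push_cast; ring, Real.rpow_natCast]
    have hpow0 : ∀ x : ℝ, x ^ ((n : ℝ) + 1 - 1) = x ^ n := fun x => by
      rw [show ((n : ℝ) + 1 - 1) = ((n : ℕ) : ℝ) by push_cast; ring, Real.rpow_natCast]
    have hpow3 : ∀ x : ℝ, x ^ ((n : ℝ) + 2 - 1) = x ^ (n + 1) := fun x => by
      rw [show ((n : ℝ) + 2 - 1) = ((n + 1 : ℕ) : ℝ) by push_cast; ring, Real.rpow_natCast]
    have hfac : (n.factorial : ℝ) ≠ 0 := Nat.cast_ne_zero.mpr n.factorial_ne_zero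
    have hpt : ∀ y : ℝ, gammaPDF ((n : ℝ) + 1) l (z - y) * gammaPDF 1 l y
        = (Icc 0 z).indicator (fun y => ENNReal.ofReal (C * (z - y) ^ n)) y := by
      intro y
      rcases lt_or_ge y 0 with hy | hy
      · rw [gammaPDF_of_neg (by linarith : y < 0), mul_zero,
          Set.indicator_of_notMem (by simp [Set.mem_Icc]; intro h; linarith)]
      rcases lt_or_ge z y with hzy | hzy
      · rw [gammaPDF_of_neg (by linarith : z - y < 0), zero_mul,
          Set.indicator_of_notMem (by simp [Set.mem_Icc]; intro h; linarith)]
      · have hn1 : (0:ℝ) ≤ z - y := by linarith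
        rw [Set.indicator_of_mem (Set.mem_Icc.mpr ⟨hy, hzy⟩),
          gammaPDF_of_nonneg hn1, gammaPDF_of_nonneg hy,
          ← ENNReal.ofReal_mul (by
            have hGpos : 0 < Real.Gamma ((n : ℝ) + 1) := by
              rw [hG1]; positivity
            have h1 : 0 ≤ l ^ ((n : ℝ) + 1) := Real.rpow_nonneg hl.le _
            have h2 : 0 ≤ (z - y) ^ ((n : ℝ) + 1 - 1) := Real.rpow_nonneg hn1 _
            have h3 : 0 ≤ Real.exp (-(l * (z - y))) := (Real.exp_pos _).le
            positivity)]
        congr 1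
        rw [hG1, hpow1, hpow0]
        simp only [Real.Gamma_one, Real.rpow_one, sub_self, Real.rpow_zero]
        have hee : rexp (-(l * (z - y))) * rexp (-(l * y)) = rexp (-(l * z)) := by
          rw [← Real.exp_add]; congr 1; ring
        rw [hC, ← hee]
        ring
    simp only [hpt]
    rw [lintegral_indicator measurableSet_Icc]
    have hint : IntegrableOn (fun y : ℝ => C * (z - y) ^ n) (Icc 0 z) :=
      (Continuous.integrableOn_Icc (by continuity))
    rw [← ofReal_integral_eq_lintegral_ofReal hint]
    · have hI : ∫ y in Icc 0 z, C * (z - y) ^ n = C * (z ^ (n + 1) / (n + 1)) := by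
        rw [MeasureTheory.integral_Icc_eq_integral_Ioc, ← intervalIntegral.integral_of_le hz,
          intervalIntegral.integral_const_mul, intervalIntegral.integral_comp_sub_left
            (fun u => u ^ n) z]
        simp [integral_pow]
      rw [hI, gammaPDF_of_nonneg hz]
      congr 1
      rw [hG2, hpow2, hpow3, hC, Nat.factorial_succ]
      have hn0 : ((n:ℝ) + 1) ≠ 0 := by positivity
      push_cast
      field_simp
    · rw [Filter.EventuallyLE, ae_restrict_iff' measurableSet_Icc]
      refine ae_of_all _ fun y hy => ?_
      have h1 : 0 ≤ z - y := by linarith [hy.2]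
      simp only [Pi.zero_apply]
      positivity


lemma measurable_gammaPDF' (a r : ℝ) : Measurable (gammaPDF a r) := by
  unfold ProbabilityTheory.gammaPDF
  exact (measurable_gammaPDFReal a r).ennreal_ofReal

lemma map_sum_eq_gammaMeasure {Ω : Type*} [MeasurableSpace Ω] (P : Measure Ω)
    [IsProbabilityMeasure P] {l : ℝ} (hl : 0 < l)
    (α : ℕ → Ω → ℝ) (hmeas : ∀ i, Measurable (α i))
    (hindep : iIndepFun α P)
    (hlaw : ∀ i, P.map (α i) = expMeasure l) :
    ∀ n : ℕ, P.map (fun ω => ∑ i ∈ Finset.range (n + 1), α i ω)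
      = gammaMeasure ((n : ℝ) + 1) l := by
  intro n
  induction n with
  | zero =>
    simp only [Finset.sum_range_one, Nat.cast_zero, zero_add]
    exact hlaw 0
  | succ n ih =>
    have hXmeas : Measurable (fun ω => ∑ i ∈ Finset.range (n + 1), α i ω) :=
      Finset.measurable_sum _ fun i _ => hmeas i
    have hsum_eq : (∑ j ∈ Finset.range (n + 1), α j)
        = fun ω => ∑ j ∈ Finset.range (n + 1), α j ω := by
      funext ω; simp
    have hind : IndepFun (fun ω => ∑ j ∈ Finset.range (n + 1), α j ω) (α (n + 1)) P := by
      have h := hindep.indepFun_sum_range_succ hmeas (n + 1)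
      rwa [hsum_eq] at h
    have hprod := (indepFun_iff_map_prod_eq_prod_map_map hXmeas.aemeasurable
      (hmeas (n + 1)).aemeasurable).mp hind
    have hfun : (fun ω => ∑ i ∈ Finset.range (n + 1 + 1), α i ω)
        = (fun p : ℝ × ℝ => p.1 + p.2) ∘
          (fun ω => ((∑ i ∈ Finset.range (n + 1), α i ω : ℝ), α (n + 1) ω)) := by
      funext ω; simp [Finset.sum_range_succ]
    rw [hfun, ← Measure.map_map measurable_add (hXmeas.prodMk (hmeas (n + 1))), hprod, ih,
      hlaw (n + 1)]
    have hconv : ((gammaMeasure ((n : ℝ) + 1) l).prod (expMeasure l)).map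
        (fun p : ℝ × ℝ => p.1 + p.2) = gammaMeasure ((n : ℝ) + 2) l := by
      show MeasureTheory.Measure.conv (volume.withDensity (gammaPDF ((n : ℝ) + 1) l))
        (volume.withDensity (gammaPDF 1 l)) = volume.withDensity (gammaPDF ((n : ℝ) + 2) l)
      rw [conv_withDensity _ _ (measurable_gammaPDF' _ _) (measurable_gammaPDF' _ _)]
      congr 1
      funext z
      exact gammaPDF_succ_conv n hl z
    rw [hconv]
    congr 1
    push_cast
    ring


/-- `(x)₊^(-β)`: equals `x ^ (-β)` if `x > 0` and `0` otherwise. -/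
noncomputable def posNegPow (x β : ℝ) : ℝ := if 0 < x then x ^ (-β) else 0

/-- For `λ > 0`, `0 < β < 1` and `s > 0`, with `T_n` the partial sums of i.i.d.
exponential random variables of rate `λ`, the series `∑_{m=1}^∞ E[(s − T_m)₊^{−β}]` converges
and equals `λ s^{1−β}/(1−β)`. -/
theorem stmt_0
    {Ω : Type*} [MeasurableSpace Ω] (P : Measure Ω) [IsProbabilityMeasure P]
    (l β s : ℝ) (hl : 0 < l) (hβ0 : 0 < β) (hβ1 : β < 1) (hs : 0 < s)
    (α : ℕ → Ω → ℝ) (hmeas : ∀ i, Measurable (α i))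
    (hindep : iIndepFun α P)
    (hlaw : ∀ i, P.map (α i) = expMeasure l)
    (T : ℕ → Ω → ℝ) (hT : ∀ n ω, T n ω = ∑ i ∈ Finset.range n, α i ω) :
    (∀ n : ℕ, Integrable (fun ω => posNegPow (s - T (n + 1) ω) β) P) ∧
      HasSum (fun n : ℕ => ∫ ω, posNegPow (s - T (n + 1) ω) β ∂P)
        (l * s ^ (1 - β) / (1 - β)) := by
  have hpnn : ∀ x : ℝ, 0 ≤ posNegPow x β := fun x => by
    unfold posNegPow; split_ifs with h
    · exact Real.rpow_nonneg h.le _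
    · exact le_refl 0
  have hppm : Measurable fun x : ℝ => posNegPow x β := by
    unfold posNegPow
    exact Measurable.ite (measurableSet_lt measurable_const measurable_id)
      (by fun_prop) measurable_const
  have hFmeas : Measurable fun x : ℝ => ENNReal.ofReal (posNegPow (s - x) β) :=
    (hppm.comp (measurable_const.sub measurable_id)).ennreal_ofReal
  have hTfun : ∀ m : ℕ, T m = fun ω => ∑ i ∈ Finset.range m, α i ω :=
    fun m => funext fun ω => hT m ω
  have hTmeas : ∀ m : ℕ, Measurable (T m) := fun m => by
    rw [hTfun m]; exact Finset.measurable_sum _ fun i _ => hmeas i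
  have hlawT : ∀ m : ℕ, P.map (T (m + 1)) = gammaMeasure ((m : ℝ) + 1) l := fun m => by
    rw [hTfun (m + 1)]
    exact map_sum_eq_gammaMeasure P hl α hmeas hindep hlaw m
  set J : ℕ → ℝ≥0∞ :=
    fun m => ∫⁻ ω, ENNReal.ofReal (posNegPow (s - T (m + 1) ω) β) ∂P with hJdef
  have hJ : ∀ m : ℕ, J m
      = ∫⁻ x, gammaPDF ((m : ℝ) + 1) l x * ENNReal.ofReal (posNegPow (s - x) β) := by
    intro m
    show (∫⁻ ω, ENNReal.ofReal (posNegPow (s - T (m + 1) ω) β) ∂P) = _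
    have h1 : ∫⁻ ω, ENNReal.ofReal (posNegPow (s - T (m + 1) ω) β) ∂P
        = ∫⁻ x, ENNReal.ofReal (posNegPow (s - x) β) ∂(P.map (T (m + 1))) :=
      (lintegral_map hFmeas (hTmeas (m + 1))).symm
    rw [h1, hlawT m]
    have h2 : gammaMeasure ((m : ℝ) + 1) l
        = volume.withDensity (gammaPDF ((m : ℝ) + 1) l) := rfl
    rw [h2, lintegral_withDensity_eq_lintegral_mul _ (measurable_gammaPDF' _ _) hFmeas]
    simp only [Pi.mul_apply]
  -- sum of the gamma densities
  have hsum_pdf : ∀ x : ℝ, (∑' m : ℕ, gammaPDF ((m : ℝ) + 1) l x)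
      = (Ici (0 : ℝ)).indicator (fun _ => ENNReal.ofReal l) x := by
    intro x
    rcases lt_or_ge x 0 with hx | hx
    · rw [Set.indicator_of_notMem (by simpa using not_le.mpr hx)]
      simp [gammaPDF_of_neg hx]
    · rw [Set.indicator_of_mem (Set.mem_Ici.mpr hx)]
      have heach : ∀ m : ℕ, gammaPDF ((m : ℝ) + 1) l x
          = ENNReal.ofReal (l * Real.exp (-(l * x)) * ((l * x) ^ m / m.factorial)) := by
        intro m
        rw [gammaPDF_of_nonneg hx]
        congr 1
        rw [Real.Gamma_nat_eq_factorial,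
          show ((m : ℝ) + 1) = ((m + 1 : ℕ) : ℝ) by push_cast; ring, Real.rpow_natCast,
          show ((m + 1 : ℕ) : ℝ) - 1 = ((m : ℕ) : ℝ) by push_cast; ring, Real.rpow_natCast,
          mul_pow]
        ring
      simp only [heach]
      rw [← ENNReal.ofReal_tsum_of_nonneg (fun m => by positivity)
        ((Real.summable_pow_div_factorial (l * x)).mul_left _)]
      congr 1
      rw [tsum_mul_left]
      have hexp : ∑' m : ℕ, (l * x) ^ m / m.factorial = Real.exp (l * x) := by
        rw [Real.exp_eq_exp_ℝ, NormedSpace.exp_eq_tsum_div]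
      rw [hexp, mul_assoc, ← Real.exp_add]
      simp
  have htsum : ∑' m : ℕ, J m = ENNReal.ofReal (l * s ^ (1 - β) / (1 - β)) := by
    have hstep1 : ∑' m : ℕ, J m
        = ∫⁻ x, (∑' m : ℕ, gammaPDF ((m : ℝ) + 1) l x)
            * ENNReal.ofReal (posNegPow (s - x) β) := by
      simp only [hJ]
      rw [← lintegral_tsum (f := fun (m : ℕ) x => gammaPDF ((m : ℝ) + 1) l x * ENNReal.ofReal (posNegPow (s - x) β)) (fun m => ((measurable_gammaPDF' _ _).mul hFmeas).aemeasurable)]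
      congr 1
      funext x
      rw [ENNReal.tsum_mul_right]
    rw [hstep1]
    have hstep2 : ∀ x : ℝ, (∑' m : ℕ, gammaPDF ((m : ℝ) + 1) l x)
          * ENNReal.ofReal (posNegPow (s - x) β)
        = (Ico (0 : ℝ) s).indicator
            (fun x => ENNReal.ofReal l * ENNReal.ofReal ((s - x) ^ (-β))) x := by
      intro x
      rw [hsum_pdf x]
      rcases lt_or_ge x 0 with hx | hx
      · rw [Set.indicator_of_notMem (by simpa using not_le.mpr hx),
          Set.indicator_of_notMem (fun h => (not_le.mpr hx) h.1)]
        rw [zero_mul]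
      · rw [Set.indicator_of_mem (Set.mem_Ici.mpr hx)]
        rcases lt_or_ge x s with hxs | hxs
        · rw [Set.indicator_of_mem (Set.mem_Ico.mpr ⟨hx, hxs⟩)]
          congr 2
          unfold posNegPow
          rw [if_pos (by linarith : (0:ℝ) < s - x)]
        · rw [Set.indicator_of_notMem (fun h => (not_lt.mpr hxs) h.2)]
          have : posNegPow (s - x) β = 0 := by
            unfold posNegPow
            rw [if_neg (by push_neg; linarith)]
          rw [this, ENNReal.ofReal_zero, mul_zero]
    rw [lintegral_congr hstep2, lintegral_indicator measurableSet_Ico,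
      lintegral_const_mul' _ _ ENNReal.ofReal_ne_top]
    have hsub : ∫⁻ x in Ico (0:ℝ) s, ENNReal.ofReal ((s - x) ^ (-β))
        = ∫⁻ u in Ioc (0:ℝ) s, ENNReal.ofReal (u ^ (-β)) := by
      have hpre : Ico (0:ℝ) s = (fun x : ℝ => s - x) ⁻¹' (Ioc 0 s) := by
        ext x
        simp only [Set.mem_Ico, Set.mem_preimage, Set.mem_Ioc]
        constructor
        · rintro ⟨h1, h2⟩; exact ⟨by linarith, by linarith⟩
        · rintro ⟨h1, h2⟩; exact ⟨by linarith, by linarith⟩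
      rw [hpre]
      exact (Measure.measurePreserving_sub_left volume s).setLIntegral_comp_preimage_emb
        (Homeomorph.subLeft s).measurableEmbedding (fun u => ENNReal.ofReal (u ^ (-β)))
        (Ioc 0 s)
    rw [hsub]
    have hrint : IntegrableOn (fun u : ℝ => u ^ (-β)) (Ioc 0 s) := by
      have h := intervalIntegral.intervalIntegrable_rpow'
        (a := 0) (b := s) (show (-1:ℝ) < -β by linarith)
      rwa [intervalIntegrable_iff, uIoc_of_le hs.le] at h
    have hval : ∫ u in Ioc (0:ℝ) s, u ^ (-β) = s ^ (1 - β) / (1 - β) := by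
      rw [← intervalIntegral.integral_of_le hs.le,
        integral_rpow (Or.inl (by linarith : (-1:ℝ) < -β)),
        Real.zero_rpow (by linarith : -β + 1 ≠ 0),
        show -β + 1 = 1 - β by ring]
      ring
    have hlio : ∫⁻ u in Ioc (0:ℝ) s, ENNReal.ofReal (u ^ (-β))
        = ENNReal.ofReal (s ^ (1 - β) / (1 - β)) := by
      rw [← ofReal_integral_eq_lintegral_ofReal hrint ?_, hval]
      rw [Filter.EventuallyLE, ae_restrict_iff' measurableSet_Ioc]
      refine ae_of_all _ fun u hu => ?_
      simp only [Pi.zero_apply]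
      exact Real.rpow_nonneg hu.1.le _
    rw [hlio, ← ENNReal.ofReal_mul hl.le, mul_div_assoc]
  have hJfin : ∀ m : ℕ, J m ≠ ⊤ := fun m =>
    ne_top_of_le_ne_top (by rw [htsum]; exact ENNReal.ofReal_ne_top) (ENNReal.le_tsum m)
  constructor
  · intro n
    refine ⟨(hppm.comp (measurable_const.sub (hTmeas (n + 1)))).aestronglyMeasurable, ?_⟩
    rw [hasFiniteIntegral_iff_ofReal (ae_of_all _ fun ω => hpnn _)]
    exact (hJfin n).lt_top
  · have h1 : (fun n : ℕ => ∫ ω, posNegPow (s - T (n + 1) ω) β ∂P)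
        = fun n => (J n).toReal := by
      funext n
      rw [integral_eq_lintegral_of_nonneg_ae (f := fun ω => posNegPow (s - T (n + 1) ω) β) (ae_of_all _ fun ω => hpnn _)
        ((hppm.comp (measurable_const.sub (hTmeas (n + 1)))).aestronglyMeasurable)]
    rw [h1]
    have h2 := ENNReal.hasSum_toReal (f := J) (by rw [htsum]; exact ENNReal.ofReal_ne_top)
    have h3 : (∑' n : ℕ, (J n).toReal) = l * s ^ (1 - β) / (1 - β) := by
      rw [← ENNReal.tsum_toReal_eq hJfin, htsum, ENNReal.toReal_ofReal]
      have h4 : (0:ℝ) ≤ s ^ (1 - β) := Real.rpow_nonneg hs.le _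
      have h5 : (0:ℝ) < 1 - β := by linarith
      positivity
    rwa [h3] at h2
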